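/- Let (R, m) be a commutative Noetherian local ring with maximal ideal m, and let M be a flat R-module. Then the m-adic completion of M, i.e., the inverse limit lim_k M/m^k M, is a flat R-module. -/

import Mathlib

open TensorProduct LinearMap Submodule

section Infra

universe u v

variable {R : Type u} [CommRing R] {M : Type v} [AddCommGroup M] [Module R M]
variable {ι : Type} [Fintype ι] [DecidableEq ι] {κ : Type} [Fintype κ] [DecidableEq κ]

/-- The canonical iso `M ⊗ (ι → R) ≃ (ι → M)`. -/
noncomputable def eIso (R : Type u) [CommRing R] (M : Type v) [AddCommGroup M] [Module R M]
    (ι : Type) [Fintype ι] [DecidableEq ι] : M ⊗[R] (ι → R) ≃ₗ[R] (ι → M) :=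
  TensorProduct.piScalarRight R R M ι

lemma eIso_tmul (m : M) (v : ι → R) : eIso R M ι (m ⊗ₜ v) = fun i => v i • m := by
  simp [eIso]

lemma eIso_symm_single (m : M) (j : ι) :
    (eIso R M ι).symm (Pi.single j m) = m ⊗ₜ Pi.single j 1 := by
  apply (eIso R M ι).injective
  rw [LinearEquiv.apply_symm_apply, eIso_tmul]
  ext i
  rcases eq_or_ne i j with rfl | h
  · simp
  · simp [Pi.single_apply, h]

/-- "Base change" of a map between finite free modules to `M`-valued pi types. -/
noncomputable def pmap (M : Type v) [AddCommGroup M] [Module R M]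
    (h : (κ → R) →ₗ[R] (ι → R)) : (κ → M) →ₗ[R] (ι → M) :=
  (eIso R M ι).toLinearMap ∘ₗ lTensor M h ∘ₗ (eIso R M κ).symm.toLinearMap

lemma pmap_apply (h : (κ → R) →ₗ[R] (ι → R)) (x : κ → M) (i : ι) :
    pmap M h x i = ∑ j, h (Pi.single j 1) i • x j := by
  have hx : x = ∑ j, Pi.single j (x j) := by
    ext i; simp [Finset.sum_apply, Pi.single_apply]
  rw [pmap]
  conv_lhs => rw [hx]
  simp only [coe_comp, Function.comp_apply, LinearEquiv.coe_coe, map_sum, eIso_symm_single,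
    lTensor_tmul]
  rw [Finset.sum_apply]
  exact Finset.sum_congr rfl fun j _ => by rw [eIso_tmul]

end Infra
section Tsub

set_option linter.unusedSectionVars false

universe u v

open TensorProduct LinearMap Submodule

variable {R : Type u} [CommRing R] {M : Type v} [AddCommGroup M] [Module R M]
variable {ι : Type} [Fintype ι] [DecidableEq ι] {κ : Type} [Fintype κ] [DecidableEq κ]

/-- For a fixed `m : M`, the map `(ι → R) →ₗ (ι → M)`, `v ↦ fun i => v i • m`. -/
def phiM (R : Type u) [CommRing R] {M : Type v} [AddCommGroup M] [Module R M]
    {ι : Type} (m : M) : (ι → R) →ₗ[R] (ι → M) where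
  toFun v := fun i => v i • m
  map_add' v w := by ext i; simp [add_smul]
  map_smul' r v := by ext i; simp [mul_smul]

/-- The image of `P ⊗ M` in `ι → M`, defined as a span. -/
def tsub (M : Type v) [AddCommGroup M] [Module R M] (P : Submodule R (ι → R)) :
    Submodule R (ι → M) :=
  Submodule.span R {x | ∃ (m : M) (p : ι → R), p ∈ P ∧ x = phiM R m p}

lemma phiM_mem_tsub (m : M) {P : Submodule R (ι → R)} {p : ι → R} (hp : p ∈ P) :
    phiM R m p ∈ tsub M P :=
  Submodule.subset_span ⟨m, p, hp, rfl⟩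

lemma map_phiM_le_tsub (m : M) (P : Submodule R (ι → R)) :
    Submodule.map (phiM R m) P ≤ tsub M P := by
  rintro x ⟨p, hp, rfl⟩
  exact phiM_mem_tsub m hp

lemma tsub_mono {P Q : Submodule R (ι → R)} (h : P ≤ Q) : tsub M P ≤ tsub M Q := by
  apply Submodule.span_mono
  rintro x ⟨m, p, hp, rfl⟩
  exact ⟨m, p, h hp, rfl⟩

lemma tsub_smul (I : Ideal R) (P : Submodule R (ι → R)) :
    tsub M (I • P) = I • tsub M P := by
  apply le_antisymm
  · rw [tsub, Submodule.span_le]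
    rintro x ⟨m, p, hp, rfl⟩
    have h1 : phiM R (M := M) m p ∈ Submodule.map (phiM R m) (I • P) := ⟨p, hp, rfl⟩
    rw [Submodule.map_smul''] at h1
    exact Submodule.smul_mono le_rfl (map_phiM_le_tsub m P) h1
  · apply Submodule.smul_le.mpr
    intro r hr x hx
    refine Submodule.span_induction ?_ ?_ ?_ ?_ hx
    · rintro z ⟨m, p, hp, rfl⟩
      rw [show r • phiM R (M := M) m p = phiM R m (r • p) by
        ext i; simp [phiM, smul_comm r (p i) m]]
      exact phiM_mem_tsub m (Submodule.smul_mem_smul hr hp)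
    · simp
    · intro z w _ _ hz hw
      rw [smul_add]; exact add_mem hz hw
    · intro c z _ hz
      rw [smul_comm]; exact Submodule.smul_mem _ c hz

lemma tsub_pow_smul_top (I : Ideal R) (n : ℕ) :
    tsub M (I ^ n • ⊤ : Submodule R (ι → R)) = (I ^ n • ⊤ : Submodule R (ι → M)) := by
  rw [tsub_smul]
  apply le_antisymm
  · exact Submodule.smul_mono le_rfl le_top
  · refine Submodule.smul_mono le_rfl ?_
    intro x _
    have hx : x = ∑ i, phiM R (x i) (Pi.single i 1) := by
      funext j
      rw [Finset.sum_apply, Finset.sum_eq_single j]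
      · simp [phiM]
      · intro i _ hij
        simp [phiM, Pi.single_eq_of_ne (Ne.symm hij)]
      · intro h; exact absurd (Finset.mem_univ j) h
    rw [hx]
    exact Submodule.sum_mem _ fun i _ => phiM_mem_tsub _ Submodule.mem_top

/-- Membership of components: easy direction. -/
lemma comp_mem_of_mem_pow_smul_top (I : Ideal R) (n : ℕ) {x : ι → M}
    (hx : x ∈ (I ^ n • ⊤ : Submodule R (ι → M))) (i : ι) :
    x i ∈ (I ^ n • ⊤ : Submodule R M) := by
  have h1 : x i = (LinearMap.proj i : (ι → M) →ₗ[R] M) x := rfl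
  rw [h1]
  have h2 : (LinearMap.proj i : (ι → M) →ₗ[R] M) x ∈
      Submodule.map (LinearMap.proj i) (I ^ n • ⊤ : Submodule R (ι → M)) := ⟨x, hx, rfl⟩
  rw [Submodule.map_smul''] at h2
  exact Submodule.smul_mono le_rfl le_top h2

/-- Membership of components: converse direction. -/
lemma mem_pow_smul_top_of_comp (I : Ideal R) (n : ℕ) {x : ι → M}
    (hx : ∀ i, x i ∈ (I ^ n • ⊤ : Submodule R M)) :
    x ∈ (I ^ n • ⊤ : Submodule R (ι → M)) := by
  have hxs : x = ∑ i, (LinearMap.single R (fun _ => M) i) (x i) := by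
    funext j
    rw [Finset.sum_apply, Finset.sum_eq_single j]
    · simp
    · intro i _ hij
      simp [Pi.single_eq_of_ne (Ne.symm hij)]
    · intro h; exact absurd (Finset.mem_univ j) h
  rw [hxs]
  refine Submodule.sum_mem _ fun i _ => ?_
  have h2 : (LinearMap.single R (fun _ => M) i) (x i) ∈
      Submodule.map (LinearMap.single R (fun _ => M) i) (I ^ n • ⊤ : Submodule R M) :=
    ⟨x i, hx i, rfl⟩
  rw [Submodule.map_smul''] at h2
  exact Submodule.smul_mono le_rfl le_top h2

end Tsub
section Flatpart

set_option linter.unusedSectionVars false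

universe u v

open TensorProduct LinearMap Submodule

variable {R : Type u} [CommRing R] {M : Type v} [AddCommGroup M] [Module R M]
variable {ι : Type} [Fintype ι] [DecidableEq ι] {κ : Type} [Fintype κ] [DecidableEq κ]
variable {ι' : Type} [Fintype ι'] [DecidableEq ι']

lemma tsub_eq (P : Submodule R (ι → R)) :
    tsub M P = Submodule.map ((eIso R M ι : M ⊗[R] (ι → R) →ₗ[R] (ι → M)))
      (LinearMap.range (lTensor M P.subtype)) := by
  apply le_antisymm
  · rw [tsub, Submodule.span_le]
    rintro x ⟨m, p, hp, rfl⟩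
    refine ⟨lTensor M P.subtype (m ⊗ₜ ⟨p, hp⟩), ⟨_, rfl⟩, ?_⟩
    simp only [LinearEquiv.coe_coe, lTensor_tmul]
    rw [eIso_tmul]
    rfl
  · rintro x ⟨ξ, ⟨ζ, rfl⟩, rfl⟩
    induction ζ using TensorProduct.induction_on with
    | zero => simp
    | tmul m p =>
        simp only [LinearEquiv.coe_coe, lTensor_tmul]
        rw [eIso_tmul]
        exact phiM_mem_tsub m p.2
    | add z w hz hw =>
        rw [map_add, map_add]
        exact add_mem hz hw

lemma tsub_inf_le [Module.Flat R M] (P K : Submodule R (ι → R)) :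
    tsub M P ⊓ tsub M K ≤ tsub M (P ⊓ K) := by
  rintro x ⟨hxP, hxK⟩
  rw [tsub_eq] at hxP hxK ⊢
  obtain ⟨ξ, hξ, rfl⟩ := hxP
  obtain ⟨ξ', hξ', hee⟩ := hxK
  have hmem : ξ ∈ LinearMap.range (lTensor M K.subtype) := by
    rwa [(eIso R M ι).injective hee] at hξ'
  have exact1 : Function.Exact (lTensor M K.subtype) (lTensor M K.mkQ) :=
    lTensor_exact M (LinearMap.exact_subtype_mkQ K) (Submodule.mkQ_surjective K)
  have h0 : lTensor M K.mkQ ξ = 0 := (exact1 ξ).mpr hmem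
  obtain ⟨ζ, rfl⟩ := hξ
  set ψ : ↥P →ₗ[R] (ι → R) ⧸ K := K.mkQ ∘ₗ P.subtype with hψ
  set incl : ↥(P ⊓ K) →ₗ[R] ↥P := Submodule.inclusion inf_le_left with hincl
  have hexact : Function.Exact incl ψ := by
    intro p
    constructor
    · intro hp
      have hpK : (p : ι → R) ∈ K := by
        simpa [ψ, Submodule.Quotient.mk_eq_zero] using hp
      exact ⟨⟨(p : ι → R), ⟨p.2, hpK⟩⟩, Subtype.ext rfl⟩
    · rintro ⟨q, rfl⟩
      simpa [ψ, incl, Submodule.Quotient.mk_eq_zero] using q.2.2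
  have hflat : Function.Exact (lTensor M incl) (lTensor M ψ) :=
    Module.Flat.lTensor_exact M hexact
  have h2 : lTensor M ψ ζ = 0 := by
    rw [hψ, lTensor_comp, LinearMap.comp_apply, h0]
  obtain ⟨ζ', hζ'⟩ := (hflat ζ).mp h2
  refine ⟨lTensor M (P ⊓ K).subtype ζ', ⟨ζ', rfl⟩, ?_⟩
  have hcomp : P.subtype ∘ₗ incl = (P ⊓ K).subtype := by ext q; rfl
  rw [← hcomp, lTensor_comp, LinearMap.comp_apply, hζ']

lemma range_pmap (h : (κ → R) →ₗ[R] (ι → R)) :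
    LinearMap.range (pmap M h) = tsub M (LinearMap.range h) := by
  rw [tsub_eq]
  have hcr : (LinearMap.range h).subtype ∘ₗ h.rangeRestrict = h :=
    LinearMap.subtype_comp_codRestrict _ _ _
  have h1 : lTensor M h = lTensor M (LinearMap.range h).subtype ∘ₗ
      lTensor M h.rangeRestrict := by
    rw [← lTensor_comp, hcr]
  apply le_antisymm
  · rintro x ⟨z, rfl⟩
    refine ⟨lTensor M h ((eIso R M κ).symm z), ?_, rfl⟩
    rw [h1]
    exact ⟨_, rfl⟩
  · rintro x ⟨ξ, ⟨ζ, rfl⟩, rfl⟩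
    obtain ⟨ζ', hζ'⟩ := lTensor_surjective M h.surjective_rangeRestrict ζ
    refine ⟨eIso R M κ ζ', ?_⟩
    rw [pmap]
    simp only [coe_comp, Function.comp_apply, LinearEquiv.coe_coe,
      LinearEquiv.symm_apply_apply]
    rw [h1, LinearMap.comp_apply, hζ']

lemma ker_pmap [Module.Flat R M] {h₁ : (κ → R) →ₗ[R] (ι → R)} {h₂ : (ι → R) →ₗ[R] (ι' → R)}
    (hex : Function.Exact h₁ h₂) :
    LinearMap.ker (pmap M h₂) = LinearMap.range (pmap M h₁) := by
  have hT : Function.Exact (lTensor M h₁) (lTensor M h₂) :=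
    Module.Flat.lTensor_exact M hex
  ext x
  simp only [LinearMap.mem_ker, LinearMap.mem_range]
  constructor
  · intro hx
    have h0 : lTensor M h₂ ((eIso R M ι).symm x) = 0 := by
      have : (eIso R M ι') (lTensor M h₂ ((eIso R M ι).symm x)) = 0 := hx
      simpa using (eIso R M ι').map_eq_zero_iff.mp this
    obtain ⟨ζ, hζ⟩ := (hT _).mp h0
    refine ⟨eIso R M κ ζ, ?_⟩
    rw [pmap]
    simp only [coe_comp, Function.comp_apply, LinearEquiv.coe_coe,
      LinearEquiv.symm_apply_apply]
    rw [hζ]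
    simp
  · rintro ⟨z, rfl⟩
    show (eIso R M ι') (lTensor M h₂ ((eIso R M ι).symm
      ((eIso R M ι) (lTensor M h₁ ((eIso R M κ).symm z))))) = 0
    rw [LinearEquiv.symm_apply_apply, ← LinearMap.comp_apply, ← lTensor_comp]
    have : h₂ ∘ₗ h₁ = 0 := hex.linearMap_comp_eq_zero
    rw [this, lTensor_zero]
    simp

lemma pmap_artinRees [IsNoetherianRing R] [Module.Flat R M] (I : Ideal R)
    (h : (κ → R) →ₗ[R] (ι → R)) :
    ∃ c : ℕ, ∀ n : ℕ,
      (I ^ (n + c) • ⊤ : Submodule R (ι → M)) ⊓ LinearMap.range (pmap M h) ≤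
        I ^ n • LinearMap.range (pmap M h) := by
  obtain ⟨k, hk⟩ := Ideal.exists_pow_inf_eq_pow_smul I (LinearMap.range h)
  refine ⟨k, fun n => ?_⟩
  rw [range_pmap, ← tsub_pow_smul_top (M := M) I (n + k)]
  refine le_trans (tsub_inf_le _ _) ?_
  rw [hk (n + k) (by omega)]
  have hnk : n + k - k = n := by omega
  rw [hnk, tsub_smul]
  exact Submodule.smul_mono le_rfl (tsub_mono inf_le_right)

end Flatpart
section Main

universe u v

open TensorProduct LinearMap Submodule

variable {R : Type u} [CommRing R] {M : Type v} [AddCommGroup M] [Module R M]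

/-- Every relation in the adic completion of a flat module over a Noetherian ring is trivial. -/
lemma adic_trivial_rel [IsNoetherianRing R] (I : Ideal R) [Module.Flat R M]
    {ι : Type} [Fintype ι] [DecidableEq ι]
    (f : ι → R) (c : ι → AdicCompletion I M) (hc : ∑ i, f i • c i = 0) :
    ∃ (t : ℕ) (a : ι → Fin t → R) (y : Fin t → AdicCompletion I M),
      (∀ i, c i = ∑ j, a i j • y j) ∧ ∀ j, ∑ i, f i * a i j = 0 := by
  classical
  choose mseq hmseq using fun i => AdicCompletion.mk_surjective I M (c i)
  have hrel : ∀ n, (∑ i, f i • (mseq i) n) ∈ (I ^ n • ⊤ : Submodule R M) := by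
    intro n
    have key : Submodule.mkQ (I ^ n • ⊤ : Submodule R M) (∑ i, f i • mseq i n) = 0 := by
      rw [map_sum]
      have hterm : ∀ i, Submodule.mkQ (I ^ n • ⊤ : Submodule R M) (f i • mseq i n)
          = (f i • c i).val n := by
        intro i
        rw [AdicCompletion.val_smul, ← hmseq i]
        simp
      rw [Finset.sum_congr rfl fun i _ => hterm i, ← AdicCompletion.val_sum_apply, hc,
        AdicCompletion.val_zero_apply]
    rwa [Submodule.mkQ_apply, Submodule.Quotient.mk_eq_zero] at key
  -- R-level maps
  set hf : (ι → R) →ₗ[R] (Fin 1 → R) :=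
    LinearMap.pi (fun _ => Fintype.linearCombination R f) with hfdef
  obtain ⟨t, b, hb⟩ := Submodule.fg_iff_exists_fin_generating_family.mp
    (IsNoetherian.noetherian (LinearMap.ker hf))
  set hB : (Fin t → R) →ₗ[R] (ι → R) := Fintype.linearCombination R b with hBdef
  have hrange : LinearMap.range hB = LinearMap.ker hf := by
    rw [hBdef, Fintype.range_linearCombination]; exact hb
  have hex : Function.Exact hB hf := LinearMap.exact_iff.mpr hrange.symm
  set G : (Fin t → M) →ₗ[R] (ι → M) := pmap M hB with hGdef
  set F : (ι → M) →ₗ[R] (Fin 1 → M) := pmap M hf with hFdef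
  have hkerF : LinearMap.ker F = LinearMap.range G := ker_pmap hex
  obtain ⟨c₁, hc₁⟩ := pmap_artinRees (M := M) I hf
  obtain ⟨c₂, hc₂⟩ := pmap_artinRees (M := M) I hB
  set mbar : ℕ → ι → M := fun n i => mseq i n with hmbardef
  have hFval : ∀ (z : ι → M) (k : Fin 1), F z k = ∑ i, f i • z i := by
    intro z k
    rw [hFdef, pmap_apply]
    refine Finset.sum_congr rfl fun i _ => ?_
    simp [hfdef]
  have hGval : ∀ (z : Fin t → M) (i : ι), G z i = ∑ j, b j i • z j := by
    intro z i
    rw [hGdef, pmap_apply]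
    refine Finset.sum_congr rfl fun j _ => ?_
    simp [hBdef]
  have hmbar_F : ∀ n, F (mbar n) ∈ (I ^ n • ⊤ : Submodule R (Fin 1 → M)) := by
    intro n
    apply mem_pow_smul_top_of_comp
    intro k
    rw [hFval]
    exact hrel n
  have hmbar_cauchy : ∀ n, mbar (n + 1) - mbar n ∈ (I ^ n • ⊤ : Submodule R (ι → M)) := by
    intro n
    apply mem_pow_smul_top_of_comp
    intro i
    have h1 := SModEq.sub_mem.mp ((mseq i).property (Nat.le_succ n))
    have h2 := Submodule.neg_mem _ h1
    simpa [hmbardef] using h2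
  -- Step A : correct mbar to land in ker F = range G
  have hstepA : ∀ n, ∃ dd : ι → M,
      dd ∈ (I ^ n • ⊤ : Submodule R (ι → M)) ∧ F dd = F (mbar (n + c₁)) := by
    intro n
    have h1 : F (mbar (n + c₁)) ∈
        (I ^ (n + c₁) • ⊤ : Submodule R (Fin 1 → M)) ⊓ LinearMap.range F :=
      ⟨hmbar_F _, ⟨_, rfl⟩⟩
    have h2 := hc₁ n h1
    rw [← Submodule.map_top F, ← Submodule.map_smul''] at h2
    obtain ⟨dd, hdd, hdd2⟩ := h2
    exact ⟨dd, hdd, hdd2⟩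
  choose d hd hFd using hstepA
  set x : ℕ → ι → M := fun n => mbar (n + c₁) - d n with hxdef
  have hxG : ∀ n, x n ∈ LinearMap.range G := by
    intro n
    rw [← hkerF, LinearMap.mem_ker, hxdef]
    rw [map_sub, hFd n, sub_self]
  have hxm : ∀ n, x n - mbar (n + c₁) ∈ (I ^ n • ⊤ : Submodule R (ι → M)) := by
    intro n
    have : x n - mbar (n + c₁) = -(d n) := by rw [hxdef]; exact sub_sub_cancel_left _ _
    rw [this]
    exact Submodule.neg_mem _ (hd n)
  have hxdiff : ∀ n, x (n + 1) - x n ∈ (I ^ n • ⊤ : Submodule R (ι → M)) := by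
    intro n
    have h1 : x (n + 1) - x n
        = (mbar (n + c₁ + 1) - mbar (n + c₁)) - d (n + 1) + d n := by
      simp only [hxdef]
      rw [show n + 1 + c₁ = n + c₁ + 1 by omega]
      abel
    rw [h1]
    refine Submodule.add_mem _ (Submodule.sub_mem _ ?_ ?_) ?_
    · exact Submodule.smul_mono (Ideal.pow_le_pow_right (by omega)) le_rfl (hmbar_cauchy (n + c₁))
    · exact Submodule.smul_mono (Ideal.pow_le_pow_right (by omega)) le_rfl (hd (n + 1))
    · exact hd n
  -- Step B : successive differences of x come from I^n • ⊤ via G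
  have hstepB : ∀ n, ∃ vv : Fin t → M, vv ∈ (I ^ n • ⊤ : Submodule R (Fin t → M)) ∧
      G vv = x (n + c₂ + 1) - x (n + c₂) := by
    intro n
    have h1 : x (n + c₂ + 1) - x (n + c₂) ∈
        (I ^ (n + c₂) • ⊤ : Submodule R (ι → M)) ⊓ LinearMap.range G :=
      ⟨hxdiff _, Submodule.sub_mem _ (hxG _) (hxG _)⟩
    have h2 := hc₂ n h1
    rw [← Submodule.map_top G, ← Submodule.map_smul''] at h2
    obtain ⟨vv, hvv, hvv2⟩ := h2
    exact ⟨vv, hvv, hvv2⟩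
  choose v hv hGv using hstepB
  obtain ⟨u0, hu0⟩ := hxG c₂
  set u : ℕ → Fin t → M := fun n => Nat.rec u0 (fun k uk => uk + v k) n with hudef
  have hu_succ : ∀ n, u (n + 1) = u n + v n := fun n => rfl
  have hGu : ∀ n, G (u n) = x (n + c₂) := by
    intro n
    induction n with
    | zero => simpa [hudef] using hu0
    | succ k ih =>
        rw [hu_succ, map_add, ih, hGv k]
        have : k + 1 + c₂ = k + c₂ + 1 := by omega
        rw [this]; abel
  have hucauchy : ∀ j n, u n j ≡ u (n + 1) j [SMOD (I ^ n • ⊤ : Submodule R M)] := by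
    intro j n
    rw [SModEq.sub_mem, hu_succ]
    have h1 := comp_mem_of_mem_pow_smul_top I n (hv n) j
    have : u n j - (u n + v n) j = -(v n j) := by simp
    rw [this]
    exact Submodule.neg_mem _ h1
  set y : Fin t → AdicCompletion I M := fun j =>
    AdicCompletion.mk I M (AdicCompletion.AdicCauchySequence.mk I M (fun n => u n j) (hucauchy j)) with hydef
  refine ⟨t, fun i j => b j i, y, ?_, ?_⟩
  · intro i
    apply AdicCompletion.ext
    intro n
    rw [AdicCompletion.val_sum_apply]
    have hL : (c i).val n = Submodule.mkQ (I ^ n • ⊤ : Submodule R M) (mseq i n) := by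
      rw [← hmseq i]; simp
    have hRterm : ∀ j, ((b j i) • y j).val n
        = Submodule.mkQ (I ^ n • ⊤ : Submodule R M) (b j i • u n j) := by
      intro j
      rw [AdicCompletion.val_smul, hydef]
      simp
    rw [hL, Finset.sum_congr rfl fun j _ => hRterm j, ← map_sum]
    have hsum : ∑ j, b j i • u n j = G (u n) i := (hGval (u n) i).symm
    rw [hsum, hGu n]
    rw [Submodule.mkQ_apply, Submodule.mkQ_apply, Submodule.Quotient.eq]
    have h1 : x (n + c₂) i - mbar (n + c₂ + c₁) i ∈ (I ^ n • ⊤ : Submodule R M) :=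
      comp_mem_of_mem_pow_smul_top I n
        (Submodule.smul_mono (Ideal.pow_le_pow_right (by omega)) le_rfl (hxm (n + c₂))) i
    have h2 : mseq i n - mseq i (n + c₂ + c₁) ∈ (I ^ n • ⊤ : Submodule R M) := by
      have h3 := AdicCompletion.AdicCauchySequence.mk_eq_mk (I := I) (M := M)
        (Nat.le_add_right n (c₂ + c₁)) (mseq i)
      rw [show n + (c₂ + c₁) = n + c₂ + c₁ by omega] at h3
      have h4 := (Submodule.Quotient.eq _).mp h3
      simpa using Submodule.neg_mem _ h4
    have key : mseq i n - x (n + c₂) i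
        = (mseq i n - mseq i (n + c₂ + c₁)) - (x (n + c₂) i - mbar (n + c₂ + c₁) i) := by
      have : mbar (n + c₂ + c₁) i = mseq i (n + c₂ + c₁) := rfl
      rw [this]; abel
    rw [key]
    exact Submodule.sub_mem _ h2 h1
  · intro j
    have hbK : b j ∈ LinearMap.ker hf := by
      rw [← hb]
      exact Submodule.subset_span ⟨j, rfl⟩
    have hzero : hf (b j) = 0 := hbK
    have h0 : ∑ i, (b j) i • f i = 0 := by
      have := congrFun hzero 0
      simpa [hfdef, Fintype.linearCombination_apply] using this
    rw [← h0]
    refine Finset.sum_congr rfl fun i _ => ?_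
    rw [smul_eq_mul, mul_comm]

end Main
section Final

universe u v

open TensorProduct LinearMap Submodule

/-- Over a Noetherian ring, the `I`-adic completion of a flat module is flat. -/
theorem flat_adicCompletion_of_flat_general
    {R : Type u} [CommRing R] [IsNoetherianRing R] (I : Ideal R)
    (M : Type v) [AddCommGroup M] [Module R M] [Module.Flat R M] :
    Module.Flat R (AdicCompletion I M) := by
  classical
  set C := AdicCompletion I M with hC
  rw [Module.Flat.iff_rTensor_injective']
  intro J
  rw [injective_iff_map_eq_zero]
  intro z hz
  obtain ⟨S, rfl⟩ := TensorProduct.exists_finset z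
  set n := S.card with hn
  set e : Fin n ≃ ↥S := (S.equivFin).symm with he
  set f : Fin n → R := fun k => ((e k).1.1 : R) with hfdef
  set cc : Fin n → C := fun k => (e k).1.2 with hccdef
  set jel : Fin n → ↥J := fun k => (e k).1.1 with hjdef
  have hzsum : ∀ {T : Type (max u v)} [AddCommGroup T] [Module R T] (g : ↥J × C → T),
      ∑ p ∈ S, g p = ∑ k, g (e k).1 := by
    intro T _ _ g
    rw [← Finset.sum_attach S g]
    exact (Equiv.sum_comp e (fun p => g p.1)).symm
  -- the relation
  have hrel : ∑ k, f k • cc k = 0 := by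
    have h0 : rTensor C J.subtype (∑ p ∈ S, p.1 ⊗ₜ p.2) = 0 := hz
    rw [map_sum] at h0
    have h1 : ∑ p ∈ S, ((p.1 : R) ⊗ₜ[R] p.2 : R ⊗[R] C) = 0 := by
      simpa using h0
    have h2 : ∑ k, ((f k) ⊗ₜ[R] cc k : R ⊗[R] C) = 0 := by
      rw [hzsum (fun p => ((p.1 : R) ⊗ₜ[R] p.2 : R ⊗[R] C))] at h1
      exact h1
    have h3 := congrArg (TensorProduct.lid R C) h2
    simpa using h3
  obtain ⟨t, a, y, h1, h2⟩ := adic_trivial_rel I f cc hrel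
  rw [hzsum (fun p => (p.1 ⊗ₜ p.2 : ↥J ⊗[R] C))]
  calc ∑ k, (jel k ⊗ₜ cc k : ↥J ⊗[R] C)
      = ∑ k, jel k ⊗ₜ (∑ j, a k j • y j) := by
        exact Finset.sum_congr rfl fun k _ => by rw [← h1 k]
    _ = ∑ k, ∑ j, (a k j • jel k) ⊗ₜ y j := by
        refine Finset.sum_congr rfl fun k _ => ?_
        rw [tmul_sum]
        exact Finset.sum_congr rfl fun j _ => by rw [tmul_smul, smul_tmul']
    _ = ∑ j, (∑ k, a k j • jel k) ⊗ₜ y j := by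
        rw [Finset.sum_comm]
        exact Finset.sum_congr rfl fun j _ => (sum_tmul _ _ _).symm
    _ = 0 := by
        refine Finset.sum_eq_zero fun j _ => ?_
        have hj0 : (∑ k, a k j • jel k) = (0 : ↥J) := by
          apply Subtype.ext
          push_cast
          simp only [SetLike.val_smul, smul_eq_mul]
          rw [← h2 j]
          exact Finset.sum_congr rfl fun k _ => by rw [mul_comm]
        rw [hj0, zero_tmul]

/-- Over a commutative Noetherian local ring `(R, m)`, the `m`-adic completion of a flat
`R`-module is flat. -/
theorem flat_adicCompletion_of_flat
    {R : Type*} [CommRing R] [IsNoetherianRing R] [IsLocalRing R]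
    (M : Type*) [AddCommGroup M] [Module R M] [Module.Flat R M] :
    Module.Flat R (AdicCompletion (IsLocalRing.maximalIdeal R) M) := by
  exact flat_adicCompletion_of_flat_general _ M

end Final
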